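/- arXiv:2104.01390 — 4 statements merged into one kernel-verified Lean document; each statement's English description precedes it below -/
import Mathlib

section
/- Let x : ℝ → ℝⁿ be differentiable and satisfy ẋ(t) = a(x(t)) + G(x(t))·u(t) with m = n and G(x(t)) invertible for every t. Fix a constant desired state x_des ∈ ℝⁿ and let K be an n×n diagonal matrix with diagonal entries k_i > 0. If u(t) = G(x(t))⁻¹ · (K·(x_des − x(t)) − a(x(t))), then each component of the tracking error e(t) = x_des − x(t) satisfies e_i(t) = exp(−k_i t)·e_i(0) for all t ≥ 0; in particular x(t) → x_des as t → ∞. -/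
open Matrix Filter

/-- For the input-affine system `ẋ = a(x) + G(x)u` with `G(x(t))` invertible,
constant desired state `x_des`, and diagonal gain matrix `K = diagonal κ` with `κ i > 0`,
the NDI law with linear proportional feedback
`u(t) = G(x(t))⁻¹·(K·(x_des − x(t)) − a(x(t)))` makes each component of the tracking error
decay exponentially, `e_i(t) = exp(−κ_i t)·e_i(0)` for `t ≥ 0`; in particular
`x(t) → x_des` as `t → ∞`. -/
theorem ndi_proportional_feedback_exponential_tracking
    {n : ℕ}
    (a : (Fin n → ℝ) → (Fin n → ℝ))
    (G : (Fin n → ℝ) → Matrix (Fin n) (Fin n) ℝ)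
    (u : ℝ → (Fin n → ℝ))
    (x : ℝ → (Fin n → ℝ))
    (xdes : Fin n → ℝ)
    (κ : Fin n → ℝ)
    (hκ : ∀ i, 0 < κ i)
    (hx : ∀ t : ℝ, HasDerivAt x (a (x t) + (G (x t)).mulVec (u t)) t)
    (hinv : ∀ t : ℝ, IsUnit (G (x t)))
    (hu : ∀ t : ℝ,
      u t = (G (x t))⁻¹.mulVec ((Matrix.diagonal κ).mulVec (xdes - x t) - a (x t))) :
    (∀ t : ℝ, 0 ≤ t → ∀ i : Fin n,
        xdes i - x t i = Real.exp (-(κ i) * t) * (xdes i - x 0 i)) ∧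
      Tendsto x atTop (nhds xdes) := by
  -- closed-loop derivative
  have hx' : ∀ t : ℝ, HasDerivAt x ((Matrix.diagonal κ).mulVec (xdes - x t)) t := by
    intro t
    have h := hx t
    rw [hu t, Matrix.mulVec_mulVec,
      Matrix.mul_nonsing_inv _ ((Matrix.isUnit_iff_isUnit_det _).mp (hinv t)),
      Matrix.one_mulVec] at h
    simpa [add_sub_cancel] using h
  have hxi : ∀ (t : ℝ) (i : Fin n),
      HasDerivAt (fun s => x s i) (κ i * (xdes i - x t i)) t := by
    intro t i
    have := (hasDerivAt_pi.mp (hx' t)) i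
    simpa [Matrix.mulVec_diagonal, Pi.sub_apply] using this
  -- error formula for all t
  have key : ∀ (t : ℝ) (i : Fin n),
      xdes i - x t i = Real.exp (-(κ i) * t) * (xdes i - x 0 i) := by
    intro t i
    set g : ℝ → ℝ := fun s => Real.exp (κ i * s) * (xdes i - x s i) with hg
    have hg' : ∀ s, HasDerivAt g 0 s := by
      intro s
      have h1 : HasDerivAt (fun s => Real.exp (κ i * s)) (κ i * Real.exp (κ i * s)) s := by
        simpa [mul_comm] using ((hasDerivAt_id s).const_mul (κ i)).exp
      have h2 : HasDerivAt (fun s => xdes i - x s i) (-(κ i * (xdes i - x s i))) s :=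
        (hxi s i).const_sub (xdes i)
      have h3 := h1.mul h2
      have h4 : κ i * Real.exp (κ i * s) * (xdes i - x s i) +
          Real.exp (κ i * s) * -(κ i * (xdes i - x s i)) = 0 := by ring
      exact h4 ▸ h3
    have hconst : g t = g 0 := by
      have : ∀ s, deriv g s = 0 := fun s => (hg' s).deriv
      have hdg : Differentiable ℝ g := fun s => (hg' s).differentiableAt
      have := is_const_of_deriv_eq_zero hdg this t 0
      exact this
    have h0 : Real.exp (κ i * t) * (xdes i - x t i) = xdes i - x 0 i := by
      simpa [hg] using hconst
    have hne : Real.exp (κ i * t) ≠ 0 := Real.exp_ne_zero _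
    rw [neg_mul, Real.exp_neg]
    field_simp
    linarith [h0]
  refine ⟨fun t _ i => key t i, ?_⟩
  rw [tendsto_pi_nhds]
  intro i
  have hid : ∀ t : ℝ, x t i = xdes i - Real.exp (-(κ i) * t) * (xdes i - x 0 i) := by
    intro t; have := key t i; linarith
  have hexp : Tendsto (fun t : ℝ => Real.exp (-(κ i) * t)) atTop (nhds 0) := by
    have h1 : Tendsto (fun t : ℝ => κ i * t) atTop atTop :=
      Tendsto.const_mul_atTop (hκ i) tendsto_id
    exact (Real.tendsto_exp_neg_atTop_nhds_zero.comp h1).congr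
      (fun t => by simp [Function.comp, neg_mul])
  have : Tendsto (fun t : ℝ => xdes i - Real.exp (-(κ i) * t) * (xdes i - x 0 i))
      atTop (nhds (xdes i - 0 * (xdes i - x 0 i))) :=
    tendsto_const_nhds.sub (hexp.mul_const _)
  simp only [zero_mul, sub_zero] at this
  exact this.congr (fun t => (hid t).symm)
end

section
/- Let x : ℝ → ℝⁿ be differentiable and satisfy ẋ(t) = a(x(t)) + G(x(t))·u(t), let h : ℝⁿ → ℝᵏ be differentiable, suppose m = k and Dh(x(t))·G(x(t)) is invertible for every t. Fix a constant desired output y_des ∈ ℝᵏ and a diagonal matrix K with positive diagonal entries k_i. If u(t) = (Dh(x(t))·G(x(t)))⁻¹ · (K·(y_des − h(x(t))) − Dh(x(t))·a(x(t))), then each component of the output error satisfies (y_des − h(x(t)))_i = exp(−k_i t)·(y_des − h(x(0)))_i for all t ≥ 0, so the closed-loop output dynamics is exactly linear and the output converges exponentially to y_des. -/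
open Matrix

lemma exp_decay_aux {c : ℝ} {f : ℝ → ℝ} (hf : ∀ t, HasDerivAt f (-c * f t) t) :
    ∀ t : ℝ, f t = Real.exp (-c * t) * f 0 := by
  intro t
  have key : ∀ s : ℝ, HasDerivAt (fun s => Real.exp (c * s) * f s) 0 s := by
    intro s
    have h1 : HasDerivAt (fun s : ℝ => Real.exp (c * s)) (c * Real.exp (c * s)) s := by
      have := (Real.hasDerivAt_exp (c * s)).comp s ((hasDerivAt_id s).const_mul c)
      simpa [mul_comm, Function.comp_def] using this
    have := h1.mul (hf s)
    exact this.congr_deriv (by ring)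
  have hconst : Real.exp (c * t) * f t = Real.exp (c * 0) * f 0 :=
    is_const_of_deriv_eq_zero (fun s => (key s).differentiableAt)
      (fun s => (key s).deriv) t 0
  have hne : Real.exp (c * t) ≠ 0 := Real.exp_ne_zero _
  rw [mul_zero, Real.exp_zero, one_mul] at hconst
  rw [← hconst, neg_mul, Real.exp_neg]
  field_simp

/-- For the input-affine system `ẋ = a(x) + G(x)u` with differentiable output
map `h` whose Fréchet derivative is the Jacobian matrix `J`, `m = k`, `J(x(t))·G(x(t))`
invertible, constant desired output `y_des`, and diagonal gain matrix `K = diagonal κ`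
with `κ i > 0`, the NDI law with linear proportional feedback
`u(t) = (Dh(x(t))·G(x(t)))⁻¹·(K·(y_des − h(x(t))) − Dh(x(t))·a(x(t)))` makes each
component of the output error decay exponentially:
`(y_des − h(x(t)))_i = exp(−κ_i t)·(y_des − h(x(0)))_i` for all `t ≥ 0`. -/
theorem ndi_output_feedback_exponential_tracking
    {n k : ℕ}
    (a : (Fin n → ℝ) → (Fin n → ℝ))
    (G : (Fin n → ℝ) → Matrix (Fin n) (Fin k) ℝ)
    (u : ℝ → (Fin k → ℝ))
    (x : ℝ → (Fin n → ℝ))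
    (h : (Fin n → ℝ) → (Fin k → ℝ))
    (J : (Fin n → ℝ) → Matrix (Fin k) (Fin n) ℝ)
    (ydes : Fin k → ℝ)
    (κ : Fin k → ℝ)
    (hκ : ∀ i, 0 < κ i)
    (hx : ∀ t : ℝ, HasDerivAt x (a (x t) + (G (x t)).mulVec (u t)) t)
    (hh : Differentiable ℝ h)
    (hJ : ∀ v w : Fin n → ℝ, fderiv ℝ h v w = (J v).mulVec w)
    (hinv : ∀ t : ℝ, IsUnit (J (x t) * G (x t)))
    (hu : ∀ t : ℝ,
      u t = (J (x t) * G (x t))⁻¹.mulVec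
        ((Matrix.diagonal κ).mulVec (ydes - h (x t)) - (J (x t)).mulVec (a (x t)))) :
    ∀ t : ℝ, 0 ≤ t → ∀ i : Fin k,
      ydes i - h (x t) i = Real.exp (-(κ i) * t) * (ydes i - h (x 0) i) := by
  intro t ht i
  -- derivative of h ∘ x
  have hderiv : ∀ s : ℝ, HasDerivAt (fun s => h (x s))
      ((Matrix.diagonal κ).mulVec (ydes - h (x s))) s := by
    intro s
    have hc := ((hh (x s)).hasFDerivAt).comp_hasDerivAt s (hx s)
    have hval : fderiv ℝ h (x s) (a (x s) + (G (x s)).mulVec (u s))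
        = (Matrix.diagonal κ).mulVec (ydes - h (x s)) := by
      rw [hJ]
      rw [mulVec_add, hu s, mulVec_mulVec, mulVec_mulVec,
        Matrix.mul_nonsing_inv _ ((Matrix.isUnit_iff_isUnit_det _).mp (hinv s)),
        Matrix.one_mulVec]
      simp [sub_add_cancel]
    rw [hval] at hc
    exact hc
  have hf : ∀ s : ℝ, HasDerivAt (fun s => ydes i - h (x s) i)
      (-(κ i) * (ydes i - h (x s) i)) s := by
    intro s
    have := (hasDerivAt_pi.mp (hderiv s) i).const_sub (ydes i)
    exact this.congr_deriv (by rw [Matrix.mulVec_diagonal, Pi.sub_apply]; ring)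
  exact exp_decay_aux hf t
end

section
/- Let x : ℝ → ℝⁿ be differentiable and satisfy ẋ(t) = a(x(t)) + G(x(t))·u(t), with m = n and G(x(t)) invertible for every t. Fix a constant x_des ∈ ℝⁿ, define the switching function σ(t) = x_des − x(t), and let K_n, K_s be n×n diagonal matrices with positive diagonal entries. If the control is the robust NDI/sliding-mode law u(t) = G(x(t))⁻¹·(K_n·σ(t) − a(x(t)) + K_s·sgn(σ(t))), where sgn acts entrywise with sgn(0) = 0, then for every t with σ(t) ≠ 0 one has ⟨σ(t), σ̇(t)⟩ = −σ(t)ᵀ·K_n·σ(t) − Σᵢ (K_s)ᵢᵢ·|σᵢ(t)| < 0, i.e., the sliding condition σᵀσ̇ < 0 holds off the sliding surface. -/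
open Matrix

lemma mul_sign_eq_abs (r : ℝ) : r * Real.sign r = |r| := by
  rcases lt_trichotomy r 0 with h | h | h
  · rw [Real.sign_of_neg h, abs_of_neg h]; ring
  · simp [h]
  · rw [Real.sign_of_pos h, abs_of_pos h]; ring

/-- For the input-affine system `ẋ = a(x) + G(x)u` with `G(x(t))`
invertible, constant desired state `x_des`, switching function `σ(t) = x_des − x(t)`, and
diagonal positive gain matrices `K_n = diagonal κₙ`, `K_s = diagonal κₛ`, the robust
NDI/sliding-mode law `u(t) = G(x(t))⁻¹·(K_n·σ(t) − a(x(t)) + K_s·sgn(σ(t)))` (entrywise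
sign, `sgn 0 = 0`) makes the sliding condition hold off the sliding surface: whenever
`σ(t) ≠ 0`, `⟨σ(t), σ̇(t)⟩ = −σ(t)ᵀ·K_n·σ(t) − Σᵢ (K_s)ᵢᵢ·|σᵢ(t)| < 0`. -/
theorem sliding_mode_ndi_sliding_condition
    {n : ℕ}
    (a : (Fin n → ℝ) → (Fin n → ℝ))
    (G : (Fin n → ℝ) → Matrix (Fin n) (Fin n) ℝ)
    (u : ℝ → (Fin n → ℝ))
    (x : ℝ → (Fin n → ℝ))
    (xdes : Fin n → ℝ)
    (κₙ κₛ : Fin n → ℝ)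
    (hκₙ : ∀ i, 0 < κₙ i)
    (hκₛ : ∀ i, 0 < κₛ i)
    (hx : ∀ t : ℝ, HasDerivAt x (a (x t) + (G (x t)).mulVec (u t)) t)
    (hinv : ∀ t : ℝ, IsUnit (G (x t)))
    (hu : ∀ t : ℝ,
      u t = (G (x t))⁻¹.mulVec
        ((Matrix.diagonal κₙ).mulVec (xdes - x t) - a (x t)
          + (Matrix.diagonal κₛ).mulVec fun i => Real.sign (xdes i - x t i))) :
    ∀ t : ℝ, xdes - x t ≠ 0 →
      (xdes - x t) ⬝ᵥ deriv (fun s => xdes - x s) t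
          = -((xdes - x t) ⬝ᵥ (Matrix.diagonal κₙ).mulVec (xdes - x t))
            - ∑ i, κₛ i * |xdes i - x t i| ∧
        (xdes - x t) ⬝ᵥ deriv (fun s => xdes - x s) t < 0 := by
  intro t hσ
  set σ : Fin n → ℝ := xdes - x t with hσdef
  have hGinv : (G (x t)).mulVec ((G (x t))⁻¹.mulVec
      ((Matrix.diagonal κₙ).mulVec σ - a (x t)
        + (Matrix.diagonal κₛ).mulVec fun i => Real.sign (xdes i - x t i))) =
      (Matrix.diagonal κₙ).mulVec σ - a (x t)
        + (Matrix.diagonal κₛ).mulVec fun i => Real.sign (xdes i - x t i) := by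
    rw [Matrix.mulVec_mulVec, Matrix.mul_nonsing_inv _ ((Matrix.isUnit_iff_isUnit_det _).mp (hinv t)), Matrix.one_mulVec]
  have hxdot : a (x t) + (G (x t)).mulVec (u t)
      = (Matrix.diagonal κₙ).mulVec σ
        + (Matrix.diagonal κₛ).mulVec fun i => Real.sign (xdes i - x t i) := by
    rw [hu t, hGinv]; abel
  have hderiv : HasDerivAt (fun s => xdes - x s) (-(a (x t) + (G (x t)).mulVec (u t))) t := by
    exact ((hasDerivAt_const t xdes).sub (hx t)).congr_deriv (zero_sub _)
  have hd : deriv (fun s => xdes - x s) t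
      = -((Matrix.diagonal κₙ).mulVec σ
        + (Matrix.diagonal κₛ).mulVec fun i => Real.sign (xdes i - x t i)) := by
    rw [hderiv.deriv, hxdot]
  have key : σ ⬝ᵥ deriv (fun s => xdes - x s) t
      = -(σ ⬝ᵥ (Matrix.diagonal κₙ).mulVec σ) - ∑ i, κₛ i * |xdes i - x t i| := by
    have hs : ∑ i, σ i * (κₛ i * (xdes i - x t i).sign)
        = ∑ i, κₛ i * |xdes i - x t i| := by
      refine Finset.sum_congr rfl fun i _ => ?_
      have : σ i = xdes i - x t i := by simp [hσdef]
      rw [this, ← mul_sign_eq_abs (xdes i - x t i)]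
      ring
    rw [hd, dotProduct_neg, dotProduct_add]
    simp only [dotProduct, Matrix.mulVec_diagonal]
    rw [hs]
    ring
  refine ⟨key, ?_⟩
  rw [key]
  have h1 : 0 < σ ⬝ᵥ (Matrix.diagonal κₙ).mulVec σ := by
    simp only [dotProduct, Matrix.mulVec_diagonal]
    obtain ⟨j, hj⟩ : ∃ j, σ j ≠ 0 := Function.ne_iff.mp hσ
    apply Finset.sum_pos' (fun i _ => by nlinarith [sq_nonneg (σ i), (hκₙ i), sq_abs (σ i)])
    refine ⟨j, Finset.mem_univ j, ?_⟩
    have h2 : 0 < σ j * σ j := mul_self_pos.mpr hj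
    nlinarith [hκₙ j]
  have h2 : 0 ≤ ∑ i, κₛ i * |xdes i - x t i| :=
    Finset.sum_nonneg fun i _ => mul_nonneg (hκₛ i).le (abs_nonneg _)
  linarith
end

section
/- Let σ : [0, ∞) → ℝⁿ (Euclidean) be differentiable and let η > 0. Suppose the reaching condition ⟨σ(t), σ̇(t)⟩ ≤ −η·‖σ(t)‖ holds whenever σ(t) ≠ 0. Then the trajectory reaches the sliding surface in finite time: there exists t* with 0 ≤ t* ≤ ‖σ(0)‖/η and σ(t*) = 0. -/
/-- If `σ : [0, ∞) → ℝⁿ` (Euclidean) is differentiable and satisfies the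
η-reaching condition `⟨σ(t), σ̇(t)⟩ ≤ −η‖σ(t)‖` whenever `σ(t) ≠ 0` (for `t ≥ 0`), then
the sliding surface is reached in finite time: there is `t*` with
`0 ≤ t* ≤ ‖σ(0)‖/η` and `σ(t*) = 0`. -/
theorem sliding_surface_finite_time_reaching
    {n : ℕ}
    (σ : ℝ → EuclideanSpace ℝ (Fin n))
    (η : ℝ)
    (hη : 0 < η)
    (hdiff : Differentiable ℝ σ)
    (hreach : ∀ t : ℝ, 0 ≤ t → σ t ≠ 0 →
      (inner ℝ (σ t) (deriv σ t) : ℝ) ≤ -η * ‖σ t‖) :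
    ∃ tstar : ℝ, 0 ≤ tstar ∧ tstar ≤ ‖σ 0‖ / η ∧ σ tstar = 0 := by
  set T : ℝ := ‖σ 0‖ / η with hT
  have hT0 : 0 ≤ T := div_nonneg (norm_nonneg _) hη.le
  by_contra hcon
  push_neg at hcon
  have hne : ∀ t ∈ Set.Icc (0:ℝ) T, σ t ≠ 0 := by
    intro t ht hz
    exact hcon t ht.1 ht.2 hz
  -- derivative of ‖σ t‖ at t with σ t ≠ 0
  have hderiv : ∀ t ∈ Set.Icc (0:ℝ) T,
      HasDerivAt (fun s => ‖σ s‖) ((inner ℝ (σ t) (deriv σ t) : ℝ) / ‖σ t‖) t := by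
    intro t ht
    have hd : HasDerivAt σ (deriv σ t) t := (hdiff t).hasDerivAt
    have h2 : HasDerivAt (fun s => ‖σ s‖ ^ 2)
        (2 * (inner ℝ (σ t) (deriv σ t) : ℝ)) t := hd.norm_sq
    have hne0 : ‖σ t‖ ^ 2 ≠ 0 := pow_ne_zero 2 (norm_ne_zero_iff.2 (hne t ht))
    have hs := h2.sqrt hne0
    have heq : (fun s => Real.sqrt (‖σ s‖ ^ 2)) = fun s => ‖σ s‖ := by
      funext s; rw [Real.sqrt_sq (norm_nonneg _)]
    rw [heq] at hs
    convert hs using 1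
    rw [Real.sqrt_sq (norm_nonneg _)]
    field_simp
  -- g t = ‖σ t‖ + η t is antitone on [0,T]
  have hgderiv : ∀ t ∈ Set.Icc (0:ℝ) T,
      HasDerivAt (fun s => ‖σ s‖ + η * s)
        ((inner ℝ (σ t) (deriv σ t) : ℝ) / ‖σ t‖ + η) t := by
    intro t ht
    have h := (hderiv t ht).add ((hasDerivAt_id t).const_mul η)
    simp only [mul_one] at h
    exact h
  have hanti : AntitoneOn (fun s => ‖σ s‖ + η * s) (Set.Icc 0 T) := by
    apply antitoneOn_of_deriv_nonpos (convex_Icc 0 T)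
    · exact (hdiff.continuous.norm.add (continuous_const.mul continuous_id)).continuousOn
    · intro t ht
      rw [interior_Icc] at ht
      exact ((hgderiv t ⟨ht.1.le, ht.2.le⟩).differentiableAt).differentiableWithinAt
    · intro t ht
      rw [interior_Icc] at ht
      have ht' : t ∈ Set.Icc (0:ℝ) T := ⟨ht.1.le, ht.2.le⟩
      rw [(hgderiv t ht').deriv]
      have hpos : (0:ℝ) < ‖σ t‖ := norm_pos_iff.2 (hne t ht')
      have := hreach t ht.1.le (hne t ht')
      have hdivle : (inner ℝ (σ t) (deriv σ t) : ℝ) / ‖σ t‖ ≤ -η := by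
        rw [div_le_iff₀ hpos]
        linarith
      linarith
  have hle := hanti (Set.left_mem_Icc.2 hT0) (Set.right_mem_Icc.2 hT0) hT0
  simp only at hle
  have hTval : η * T = ‖σ 0‖ := by
    rw [hT]; field_simp
  have hnn : (0:ℝ) ≤ ‖σ T‖ := norm_nonneg _
  have hσT : ‖σ T‖ = 0 := by linarith
  exact hne T (Set.right_mem_Icc.2 hT0) (norm_eq_zero.1 hσT)
end
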